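/- Shortness of the sup-JSD distance under stochastic post-composition: for column-stochastic matrices P, Q both indexed by Y×X and any column-stochastic matrix F indexed by Z×Y (all index types finite and nonempty), D(F·P, F·Q) ≤ D(P,Q), where · denotes matrix multiplication. -/

import Mathlib

open Finset Matrix

noncomputable section

-- log-sum inequality
lemma log_sum_ineq {I : Type*} [Fintype I] (a b : I → ℝ)
    (ha : ∀ i, 0 ≤ a i) (hb : ∀ i, 0 ≤ b i) (hab : ∀ i, a i ≠ 0 → 0 < b i) :
    (if (∑ i, a i) = 0 then 0 else (∑ i, a i) * Real.log ((∑ i, a i) / (∑ i, b i)))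
      ≤ ∑ i, if a i = 0 then 0 else a i * Real.log (a i / b i) := by
  set A := ∑ i, a i with hA
  set B := ∑ i, b i with hB
  by_cases hA0 : A = 0
  · simp only [hA0, if_true]
    have hs : ∑ i, a i = 0 := hA ▸ hA0
    have : ∀ i, a i = 0 := fun i =>
      (Finset.sum_eq_zero_iff_of_nonneg (fun i _ => ha i)).mp hs i (mem_univ i)
    simp [this]
  · have hApos : 0 < A := lt_of_le_of_ne (Finset.sum_nonneg fun i _ => ha i) (Ne.symm hA0)
    obtain ⟨i0, hi0⟩ : ∃ i, a i ≠ 0 := by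
      by_contra h; push_neg at h; exact hA0 (by simp [hA, h])
    have hBpos : 0 < B := by
      have := hab i0 hi0
      exact lt_of_lt_of_le this (Finset.single_le_sum (fun i _ => hb i) (mem_univ i0))
    rw [if_neg hA0]
    have key : ∀ i, a i + a i * Real.log (A / B) - b i * (A / B)
        ≤ (if a i = 0 then 0 else a i * Real.log (a i / b i)) := by
      intro i
      by_cases hai : a i = 0
      · have h0 : 0 ≤ b i * (A / B) :=
          mul_nonneg (hb i) (div_nonneg hApos.le hBpos.le)
        simp [hai]
        linarith
      · rw [if_neg hai]
        have hapos : 0 < a i := lt_of_le_of_ne (ha i) (Ne.symm hai)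
        have hbpos : 0 < b i := hab i hai
        have h1 : Real.log ((b i * A) / (a i * B)) ≤ (b i * A) / (a i * B) - 1 :=
          Real.log_le_sub_one_of_pos (by positivity)
        have h2 : Real.log ((b i * A) / (a i * B))
            = Real.log (A / B) - Real.log (a i / b i) := by
          rw [show (b i * A) / (a i * B) = (A / B) / (a i / b i) by field_simp,
            Real.log_div (by positivity) (by positivity)]
        rw [h2] at h1
        have h3 : a i * (Real.log (A / B) - Real.log (a i / b i))
            ≤ a i * ((b i * A) / (a i * B) - 1) :=
          mul_le_mul_of_nonneg_left h1 (le_of_lt hapos)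
        have h4 : a i * ((b i * A) / (a i * B)) = b i * (A / B) := by
          field_simp
        nlinarith [h3, h4]
    calc A * Real.log (A / B)
        = ∑ i, (a i + a i * Real.log (A / B) - b i * (A / B)) := by
          rw [Finset.sum_sub_distrib, Finset.sum_add_distrib, ← Finset.sum_mul,
            ← Finset.sum_mul, ← hA, ← hB]
          field_simp; ring
      _ ≤ _ := Finset.sum_le_sum fun i _ => key i

/-- A probability vector on a finite type: nonnegative entries summing to 1. -/
def IsProbVec {X : Type*} [Fintype X] (p : X → ℝ) : Prop :=
  (∀ x, 0 ≤ p x) ∧ ∑ x, p x = 1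

/-- Kullback–Leibler divergence, with the convention that terms with `p x = 0`
contribute `0`. -/
noncomputable def KL {X : Type*} [Fintype X] (p q : X → ℝ) : ℝ :=
  ∑ x, if p x = 0 then 0 else p x * Real.log (p x / q x)

/-- Jensen–Shannon distance. -/
noncomputable def JSD {X : Type*} [Fintype X] (p q : X → ℝ) : ℝ :=
  Real.sqrt ((1 / 2) * KL p (fun x => (p x + q x) / 2)
    + (1 / 2) * KL q (fun x => (p x + q x) / 2))

/-- A column-stochastic matrix: nonnegative entries, every column sums to 1. -/
def IsColStoch {Y X : Type*} [Fintype Y] [Fintype X] (M : Matrix Y X ℝ) : Prop :=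
  (∀ y x, 0 ≤ M y x) ∧ ∀ x, ∑ y, M y x = 1

/-- The sup-JSD distance between two matrices of the same shape:
the maximum over columns of the JSD between corresponding columns. -/
noncomputable def supJSD {Y X : Type*} [Fintype Y] [Fintype X] [Nonempty X]
    (M N : Matrix Y X ℝ) : ℝ :=
  Finset.univ.sup' Finset.univ_nonempty fun x => JSD (fun y => M y x) (fun y => N y x)

/-- An abstraction matrix: entries in {0,1}, every column contains exactly one 1,
and every row contains at least one 1. -/
def IsAbsMatrix {N M : Type*} [Fintype N] [Fintype M] (α : Matrix N M ℝ) : Prop :=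
  (∀ j i, α j i = 0 ∨ α j i = 1) ∧ (∀ i, ∃! j, α j i = 1) ∧ (∀ j, ∃ i, α j i = 1)

/-- The pseudo-inverse `α⁺ = αᵀ·(α·αᵀ)⁻¹` of an abstraction matrix. -/
noncomputable def pinv {N M : Type*} [Fintype N] [Fintype M] [DecidableEq N]
    (α : Matrix N M ℝ) : Matrix M N ℝ :=
  αᵀ * (α * αᵀ)⁻¹


lemma KL_dpi {Y Z : Type*} [Fintype Y] [Fintype Z]
    (F : Matrix Z Y ℝ) (hF : (∀ z y, 0 ≤ F z y) ∧ ∀ y, ∑ z, F z y = 1)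
    (p m : Y → ℝ) (hp : ∀ y, 0 ≤ p y) (hm : ∀ y, 0 ≤ m y)
    (hpm : ∀ y, p y ≠ 0 → 0 < m y) :
    KL (fun z => ∑ y, F z y * p y) (fun z => ∑ y, F z y * m y) ≤ KL p m := by
  unfold KL
  have step1 : ∀ z, (if (∑ y, F z y * p y) = 0 then 0
      else (∑ y, F z y * p y) * Real.log ((∑ y, F z y * p y) / (∑ y, F z y * m y)))
      ≤ ∑ y, if F z y * p y = 0 then 0
        else F z y * (p y * Real.log (p y / m y)) := by
    intro z
    have h := log_sum_ineq (fun y => F z y * p y) (fun y => F z y * m y)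
      (fun y => mul_nonneg (hF.1 z y) (hp y))
      (fun y => mul_nonneg (hF.1 z y) (hm y))
      (fun y hy => by
        have hFzy : F z y ≠ 0 := fun h => hy (by simp [h])
        have hpy : p y ≠ 0 := fun h => hy (by simp [h])
        exact mul_pos (lt_of_le_of_ne (hF.1 z y) (Ne.symm hFzy)) (hpm y hpy))
    refine h.trans (le_of_eq (Finset.sum_congr rfl fun y _ => ?_))
    by_cases hy : F z y * p y = 0
    · simp [hy]
    · rw [if_neg hy, if_neg hy]
      have hFzy : F z y ≠ 0 := fun h => hy (by simp [h])
      have hlog : (F z y * p y) / (F z y * m y) = p y / m y :=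
        mul_div_mul_left _ _ hFzy
      rw [hlog]; ring
  calc ∑ z, (if (∑ y, F z y * p y) = 0 then 0
        else (∑ y, F z y * p y) * Real.log ((∑ y, F z y * p y) / (∑ y, F z y * m y)))
      ≤ ∑ z, ∑ y, if F z y * p y = 0 then 0
          else F z y * (p y * Real.log (p y / m y)) :=
        Finset.sum_le_sum fun z _ => step1 z
    _ = ∑ y, ∑ z, if F z y * p y = 0 then 0
          else F z y * (p y * Real.log (p y / m y)) := Finset.sum_comm
    _ = ∑ y, if p y = 0 then 0 else p y * Real.log (p y / m y) := by
        refine Finset.sum_congr rfl fun y _ => ?_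
        by_cases hpy : p y = 0
        · simp [hpy]
        · rw [if_neg hpy]
          have : ∀ z, (if F z y * p y = 0 then 0
              else F z y * (p y * Real.log (p y / m y)))
              = F z y * (p y * Real.log (p y / m y)) := by
            intro z
            by_cases hz : F z y = 0
            · simp [hz]
            · rw [if_neg (mul_ne_zero hz hpy)]
          simp only [this]
          rw [← Finset.sum_mul, hF.2 y, one_mul]

lemma JSD_dpi {Y Z : Type*} [Fintype Y] [Fintype Z]
    (F : Matrix Z Y ℝ) (hF : IsColStoch F)
    (p q : Y → ℝ) (hp : ∀ y, 0 ≤ p y) (hq : ∀ y, 0 ≤ q y) :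
    JSD (fun z => ∑ y, F z y * p y) (fun z => ∑ y, F z y * q y) ≤ JSD p q := by
  unfold JSD
  apply Real.sqrt_le_sqrt
  have hmid : (fun z => ((∑ y, F z y * p y) + (∑ y, F z y * q y)) / 2)
      = fun z => ∑ y, F z y * ((p y + q y) / 2) := by
    funext z
    rw [← Finset.sum_add_distrib, Finset.sum_div]
    exact Finset.sum_congr rfl fun y _ => by ring
  rw [hmid]
  have hm : ∀ y, 0 ≤ (fun y => (p y + q y) / 2) y :=
    fun y => by have := hp y; have := hq y; simp; linarith
  have h1 := KL_dpi F hF p (fun y => (p y + q y) / 2) hp hm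
    (fun y hy => by
      have : 0 < p y := lt_of_le_of_ne (hp y) (Ne.symm hy)
      have := hq y; simp; linarith)
  have h2 := KL_dpi F hF q (fun y => (p y + q y) / 2) hq hm
    (fun y hy => by
      have : 0 < q y := lt_of_le_of_ne (hq y) (Ne.symm hy)
      have := hp y; simp; linarith)
  linarith

theorem supJSD_shortness_post {X Y Z : Type*}
    [Fintype X] [Nonempty X] [Fintype Y] [Nonempty Y] [Fintype Z] [Nonempty Z]
    (P Q : Matrix Y X ℝ) (F : Matrix Z Y ℝ)
    (hP : IsColStoch P) (hQ : IsColStoch Q) (hF : IsColStoch F) :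
    supJSD (F * P) (F * Q) ≤ supJSD P Q := by
  apply Finset.sup'_le
  intro x _
  have hcol : ∀ (M : Matrix Y X ℝ), (fun z => (F * M) z x) = fun z => ∑ y, F z y * M y x := by
    intro M; funext z; rw [Matrix.mul_apply]
  rw [hcol P, hcol Q]
  refine (JSD_dpi F hF (fun y => P y x) (fun y => Q y x)
    (fun y => hP.1 y x) (fun y => hQ.1 y x)).trans ?_
  exact Finset.le_sup' (fun x => JSD (fun y => P y x) (fun y => Q y x)) (Finset.mem_univ x)
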